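/- Let (X, 𝒜, μ) be a σ-finite measure space and define Aut₂(X,𝒜,μ) as the set of nonsingular invertible transformations T with √(d(μ∘T⁻¹)/dμ) − 1 ∈ L²(μ). Then Aut₂(X,𝒜,μ) is a group under composition: it contains the identity, is closed under composition, and is closed under inverses. -/

import Mathlib

open MeasureTheory ENNReal

/-- Aut₂(X,𝒜,μ): nonsingular invertible transformations `T` (as measurable
equivalences) such that `√(d(μ∘T⁻¹)/dμ) − 1 ∈ L²(μ)`. Here `μ∘T⁻¹ = μ.map T`. -/
def Aut2 {X : Type*} [MeasurableSpace X] (μ : Measure X) : Set (X ≃ᵐ X) :=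
  {T | μ.map T ≪ μ ∧ μ ≪ μ.map T ∧
    MemLp (fun x => Real.sqrt (((μ.map T).rnDeriv μ x).toReal) - 1) 2 μ}

private lemma mem2_iff {X : Type*} [MeasurableSpace X] {μ : Measure X} {f : X → ℝ}
    (hf : AEStronglyMeasurable f μ) :
    MemLp f 2 μ ↔ ∫⁻ x, (‖f x‖₊ : ℝ≥0∞) ^ 2 ∂μ < ⊤ := by
  rw [MemLp, and_iff_right hf,
    eLpNorm_lt_top_iff_lintegral_rpow_enorm_lt_top (by norm_num) (by norm_num)]
  simp_rw [ENNReal.toReal_ofNat, ENNReal.rpow_two, enorm_eq_nnnorm]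

private lemma nnnorm_sq_ofReal (r : ℝ) : ((‖r‖₊ : ℝ≥0∞)) ^ 2 = ENNReal.ofReal (r ^ 2) := by
  rw [← Real.enorm_eq_ofReal (by positivity), ← sq_abs]
  push_cast [← Real.nnnorm_abs r]
  norm_num [pow_two]
  rfl

/-- pointwise identity for the inverse: `(√(t⁻¹) − 1)² t = (√t − 1)²`. -/
private lemma pointwise_inv (a : ℝ≥0∞) (h0 : 0 < a) (ht : a < ⊤) :
    ((‖Real.sqrt ((a⁻¹).toReal) - 1‖₊ : ℝ≥0∞)) ^ 2 * a
      = ((‖Real.sqrt (a.toReal) - 1‖₊ : ℝ≥0∞)) ^ 2 := by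
  have hta : (0:ℝ) < a.toReal := ENNReal.toReal_pos h0.ne' ht.ne
  rw [ENNReal.toReal_inv, nnnorm_sq_ofReal, nnnorm_sq_ofReal]
  nth_rewrite 2 [← ENNReal.ofReal_toReal ht.ne]
  rw [← ENNReal.ofReal_mul (by positivity)]
  congr 1
  have hs : Real.sqrt a.toReal ≠ 0 := by positivity
  have key : (Real.sqrt (a.toReal⁻¹) - 1) * Real.sqrt a.toReal = 1 - Real.sqrt a.toReal := by
    rw [Real.sqrt_inv]
    field_simp
  calc (Real.sqrt (a.toReal⁻¹) - 1) ^ 2 * a.toReal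
      = ((Real.sqrt (a.toReal⁻¹) - 1) * Real.sqrt a.toReal) ^ 2 := by
        rw [mul_pow, Real.sq_sqrt hta.le]
    _ = (1 - Real.sqrt a.toReal) ^ 2 := by rw [key]
    _ = (Real.sqrt a.toReal - 1) ^ 2 := by ring

/-- change of variables / isometry: `∫ f∘T⁻¹ · T' dμ = ∫ f dμ`. -/
private lemma lint_comp {X : Type*} [MeasurableSpace X] {μ : Measure X} [SigmaFinite μ]
    (T : X ≃ᵐ X) (hT1 : μ.map T ≪ μ) (f : X → ℝ≥0∞) (hf : Measurable f) :
    ∫⁻ x, f (T.symm x) * (μ.map T).rnDeriv μ x ∂μ = ∫⁻ x, f x ∂μ := by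
  have : SigmaFinite (μ.map T) := T.measurableEmbedding.sigmaFinite_map
  have hd : μ.withDensity ((μ.map T).rnDeriv μ) = μ.map T :=
    Measure.withDensity_rnDeriv_eq _ _ hT1
  calc ∫⁻ x, f (T.symm x) * (μ.map T).rnDeriv μ x ∂μ
      = ∫⁻ x, f (T.symm x) ∂(μ.withDensity ((μ.map T).rnDeriv μ)) := by
        have hg : AEMeasurable (fun x => f (T.symm x)) μ :=
          (hf.comp T.symm.measurable).aemeasurable
        rw [lintegral_withDensity_eq_lintegral_mul₀
          (Measure.measurable_rnDeriv _ _).aemeasurable hg]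
        exact lintegral_congr fun x => mul_comm _ _
    _ = ∫⁻ x, f (T.symm x) ∂(μ.map T) := by rw [hd]
    _ = ∫⁻ x, f x ∂μ := by
        have hg : Measurable (fun x => f (T.symm x)) :=
          hf.comp T.symm.measurable
        rw [lintegral_map hg T.measurable]
        simp

theorem stmt_18 {X : Type*} [MeasurableSpace X] (μ : Measure X) [SigmaFinite μ] :
    (MeasurableEquiv.refl X ∈ Aut2 μ) ∧
    (∀ S T : X ≃ᵐ X, S ∈ Aut2 μ → T ∈ Aut2 μ → S.trans T ∈ Aut2 μ) ∧
    (∀ T : X ≃ᵐ X, T ∈ Aut2 μ → T.symm ∈ Aut2 μ) := by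
  refine ⟨?_, ?_, ?_⟩
  · -- identity
    have hmap : μ.map (MeasurableEquiv.refl X) = μ := by simp [MeasurableEquiv.refl]
    refine ⟨by rw [hmap], by rw [hmap], ?_⟩
    have h0 : (fun x => Real.sqrt (((μ.map (MeasurableEquiv.refl X)).rnDeriv μ x).toReal) - 1)
        =ᵐ[μ] fun _ => (0 : ℝ) := by
      rw [hmap]
      filter_upwards [μ.rnDeriv_self] with x hx
      simp [hx]
    exact MemLp.zero'.ae_eq h0.symm
  · -- composition
    rintro S T ⟨hS1, hS2, hS3⟩ ⟨hT1, hT2, hT3⟩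
    have hSf : SigmaFinite (μ.map S) := S.measurableEmbedding.sigmaFinite_map
    have hTf : SigmaFinite (μ.map T) := T.measurableEmbedding.sigmaFinite_map
    have hST : μ.map (S.trans T) = (μ.map S).map T := by
      rw [Measure.map_map T.measurable S.measurable]; rfl
    have hSTf : SigmaFinite ((μ.map S).map T) := T.measurableEmbedding.sigmaFinite_map
    have hAC : (μ.map S).map T ≪ μ.map T := hS1.map T.measurable
    have hAC2 : μ.map T ≪ (μ.map S).map T := hS2.map T.measurable
    refine ⟨hST ▸ hAC.trans hT1, hST ▸ hT2.trans hAC2, ?_⟩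
    have hchain : ((μ.map S).map T).rnDeriv μ
        =ᵐ[μ] ((μ.map S).map T).rnDeriv (μ.map T) * (μ.map T).rnDeriv μ :=
      (Measure.rnDeriv_mul_rnDeriv hAC).symm
    have hmapd' : ∀ᵐ x ∂(μ.map T),
        ((μ.map S).map T).rnDeriv (μ.map T) x = (μ.map S).rnDeriv μ (T.symm x) := by
      rw [T.measurableEmbedding.ae_map_iff]
      filter_upwards [T.measurableEmbedding.rnDeriv_map (μ.map S) μ] with x hx
      simpa using hx
    have hmapd := hT2.ae_le hmapd'
    have hfinS' : ∀ᵐ x ∂(μ.map T), (μ.map S).rnDeriv μ (T.symm x) < ⊤ := by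
      rw [T.measurableEmbedding.ae_map_iff]
      simpa using Measure.rnDeriv_lt_top (μ.map S) μ
    have hfinS := hT2.ae_le hfinS'
    have hfinT : ∀ᵐ x ∂μ, (μ.map T).rnDeriv μ x < ⊤ := Measure.rnDeriv_lt_top _ _
    set fS : X → ℝ := fun x => Real.sqrt (((μ.map S).rnDeriv μ x).toReal) - 1 with hfS
    have hfSm : Measurable fS := ((Measure.measurable_rnDeriv _ _).ennreal_toReal.sqrt).sub
      measurable_const
    have hae : (fun x => Real.sqrt (((μ.map (S.trans T)).rnDeriv μ x).toReal) - 1)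
        =ᵐ[μ] fun x => fS (T.symm x) * Real.sqrt (((μ.map T).rnDeriv μ x).toReal)
          + (Real.sqrt (((μ.map T).rnDeriv μ x).toReal) - 1) := by
      rw [hST]
      filter_upwards [hchain, hmapd, hfinS, hfinT] with x h1 h2 h3 h4
      rw [h1, Pi.mul_apply, h2, ENNReal.toReal_mul,
        Real.sqrt_mul ENNReal.toReal_nonneg]
      simp only [hfS]
      ring
    refine MemLp.ae_eq hae.symm (MemLp.add ?_ hT3)
    have hm : Measurable fun x => fS (T.symm x) * Real.sqrt (((μ.map T).rnDeriv μ x).toReal) :=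
      (hfSm.comp T.symm.measurable).mul
        ((Measure.measurable_rnDeriv _ _).ennreal_toReal.sqrt)
    rw [mem2_iff hm.aestronglyMeasurable]
    have heq : ∫⁻ x, (‖fS (T.symm x) * Real.sqrt (((μ.map T).rnDeriv μ x).toReal)‖₊ : ℝ≥0∞) ^ 2 ∂μ
        = ∫⁻ x, (‖fS (T.symm x)‖₊ : ℝ≥0∞) ^ 2 * (μ.map T).rnDeriv μ x ∂μ := by
      refine lintegral_congr_ae ?_
      filter_upwards [hfinT] with x hx
      rw [nnnorm_mul, ENNReal.coe_mul, mul_pow, nnnorm_sq_ofReal, nnnorm_sq_ofReal,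
        Real.sq_sqrt ENNReal.toReal_nonneg, ENNReal.ofReal_toReal hx.ne]
    rw [heq, lint_comp T hT1 _ ((hfSm.nnnorm.coe_nnreal_ennreal).pow measurable_const)]
    exact (mem2_iff hfSm.aestronglyMeasurable).mp hS3
  · -- inverse
    rintro T ⟨hT1, hT2, hT3⟩
    have hTf : SigmaFinite (μ.map T) := T.measurableEmbedding.sigmaFinite_map
    have hSf : SigmaFinite (μ.map T.symm) := T.symm.measurableEmbedding.sigmaFinite_map
    have hmm : (μ.map T).map T.symm = μ := by
      rw [Measure.map_map T.symm.measurable T.measurable]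
      simp
    have hI1 : μ.map T.symm ≪ μ := by
      have := hT2.map T.symm.measurable
      rwa [hmm] at this
    have hI2 : μ ≪ μ.map T.symm := by
      have := hT1.map T.symm.measurable
      rwa [hmm] at this
    refine ⟨hI1, hI2, ?_⟩
    have hinvmap : ∀ᵐ x ∂(μ.map T),
        (μ.map T.symm).rnDeriv μ (T.symm x) = ((μ.map T).rnDeriv μ x)⁻¹ := by
      have h1 := T.symm.measurableEmbedding.rnDeriv_map μ (μ.map T)
      rw [hmm] at h1
      filter_upwards [h1, (Measure.inv_rnDeriv hT1)] with x hx1 hx2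
      rw [hx1, ← hx2]
      rfl
    have hposT : ∀ᵐ x ∂(μ.map T), 0 < (μ.map T).rnDeriv μ x := Measure.rnDeriv_pos hT1
    have hfinT : ∀ᵐ x ∂(μ.map T), (μ.map T).rnDeriv μ x < ⊤ :=
      hT1.ae_le (Measure.rnDeriv_lt_top _ _)
    have hFm : Measurable fun x => Real.sqrt (((μ.map T.symm).rnDeriv μ x).toReal) - 1 :=
      ((Measure.measurable_rnDeriv _ _).ennreal_toReal.sqrt).sub measurable_const
    rw [mem2_iff hFm.aestronglyMeasurable]
    have key : ∫⁻ x, (‖Real.sqrt (((μ.map T.symm).rnDeriv μ x).toReal) - 1‖₊ : ℝ≥0∞) ^ 2 ∂μ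
        = ∫⁻ x, (‖Real.sqrt (((μ.map T).rnDeriv μ x).toReal) - 1‖₊ : ℝ≥0∞) ^ 2 ∂μ := by
      have hg : Measurable (fun x =>
          (‖Real.sqrt (((μ.map T.symm).rnDeriv μ x).toReal) - 1‖₊ : ℝ≥0∞) ^ 2) :=
        (hFm.nnnorm.coe_nnreal_ennreal).pow measurable_const
      have hpull : ∫⁻ x, (‖Real.sqrt (((μ.map T.symm).rnDeriv μ x).toReal) - 1‖₊ : ℝ≥0∞) ^ 2
            ∂((μ.map T).map T.symm)
          = ∫⁻ x, (‖Real.sqrt (((μ.map T.symm).rnDeriv μ (T.symm x)).toReal) - 1‖₊ : ℝ≥0∞) ^ 2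
            ∂(μ.map T) := lintegral_map hg T.symm.measurable
      rw [hmm] at hpull
      rw [hpull]
      have step1 : ∫⁻ x,
          (‖Real.sqrt (((μ.map T.symm).rnDeriv μ (T.symm x)).toReal) - 1‖₊ : ℝ≥0∞) ^ 2
            ∂(μ.map T)
          = ∫⁻ x, (‖Real.sqrt (((((μ.map T).rnDeriv μ x)⁻¹)).toReal) - 1‖₊ : ℝ≥0∞) ^ 2
            ∂(μ.map T) := by
        refine lintegral_congr_ae ?_
        filter_upwards [hinvmap] with x hx
        rw [hx]
      rw [step1]
      have hψm : Measurable fun x =>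
          (‖Real.sqrt (((((μ.map T).rnDeriv μ x)⁻¹)).toReal) - 1‖₊ : ℝ≥0∞) ^ 2 :=
        ((((Measure.measurable_rnDeriv _ _).inv.ennreal_toReal.sqrt).sub
          measurable_const).nnnorm.coe_nnreal_ennreal).pow measurable_const
      have hd : μ.withDensity ((μ.map T).rnDeriv μ) = μ.map T :=
        Measure.withDensity_rnDeriv_eq _ _ hT1
      have hwd : ∫⁻ x, (‖Real.sqrt (((((μ.map T).rnDeriv μ x)⁻¹)).toReal) - 1‖₊ : ℝ≥0∞) ^ 2
            ∂(μ.withDensity ((μ.map T).rnDeriv μ))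
          = ∫⁻ x, ((μ.map T).rnDeriv μ * fun x =>
              (‖Real.sqrt (((((μ.map T).rnDeriv μ x)⁻¹)).toReal) - 1‖₊ : ℝ≥0∞) ^ 2) x ∂μ :=
        lintegral_withDensity_eq_lintegral_mul₀
          (Measure.measurable_rnDeriv _ _).aemeasurable hψm.aemeasurable
      rw [hd] at hwd
      rw [hwd]
      refine lintegral_congr_ae ?_
      filter_upwards [hT2.ae_le hposT, hT2.ae_le hfinT] with x hx1 hx2
      simp only [Pi.mul_apply]
      rw [mul_comm]
      exact pointwise_inv _ hx1 hx2
    rw [key]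
    exact (mem2_iff (((Measure.measurable_rnDeriv _ _).ennreal_toReal.sqrt).sub
      measurable_const).aestronglyMeasurable).mp hT3
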